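/- For integers n, p, q and n', p', q', the map sending α̃ ↦ α̃zˣ and β̃ ↦ β̃z^y, fixing z, extends to an isomorphism of central extensions T_{n,p,q} ≅ T_{n',p',q'} (inducing the identity on T and on the center) if and only if there exist integers x, y with n = n' + 5x + 5y, p = p' + 4x, q = q' + 3y. -/

import Mathlib

namespace Stmt2

open scoped commutatorElement

def ga : FreeGroup (Fin 3) := FreeGroup.of 0
def gb : FreeGroup (Fin 3) := FreeGroup.of 1
def gz : FreeGroup (Fin 3) := FreeGroup.of 2

/-- Relations of the central extension `T_{n,p,q}` of the Ptolemy-Thompson group `T`. -/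
def Trels (n p q : ℤ) : Set (FreeGroup (Fin 3)) :=
  {(gb * ga) ^ 5 * gz ^ (-n), ga ^ 4 * gz ^ (-p), gb ^ 3 * gz ^ (-q),
   ⁅gb * ga * gb, ga ^ 2 * gb * ga * gb * ga ^ 2⁆,
   ⁅gb * ga * gb, ga ^ 2 * gb * ga ^ 2 * gb * ga * gb * ga ^ 2 * gb ^ 2 * ga ^ 2⁆,
   ⁅ga, gz⁆, ⁅gb, gz⁆}

/-- The group `T_{n,p,q}`. -/
abbrev Tnpq (n p q : ℤ) := PresentedGroup (Trels n p q)

abbrev Seq := ℕ → Bool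
def cns (b : Bool) (s : Seq) : Seq := fun n => match n with | 0 => b | n+1 => s n
def tl (s : Seq) : Seq := fun n => s (n+1)

@[simp] lemma cns_zero (b : Bool) (s : Seq) : cns b s 0 = b := rfl
@[simp] lemma cns_succ (b : Bool) (s : Seq) (n : ℕ) : cns b s (n+1) = s n := rfl
@[simp] lemma tl_cns (b : Bool) (s : Seq) : tl (cns b s) = s := rfl

lemma eta2 (s : Seq) : cns (s 0) (cns (s 1) (tl (tl s))) = s := by
  funext n; rcases n with _ | _ | n <;> rfl

lemma eta3 (s : Seq) : cns (s 0) (cns (s 1) (cns (s 2) (tl (tl (tl s))))) = s := by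
  funext n; rcases n with _ | _ | _ | n <;> rfl

lemma eta4 (s : Seq) :
    cns (s 0) (cns (s 1) (cns (s 2) (cns (s 3) (tl (tl (tl (tl s))))))) = s := by
  funext n; rcases n with _ | _ | _ | _ | n <;> rfl

abbrev XX := ℤ × Seq

def Af : XX → XX := fun p =>
  match p.2 0, p.2 1 with
  | false, false => (p.1, cns false (cns true (tl (tl p.2))))
  | false, true  => (p.1, cns true (cns false (tl (tl p.2))))
  | true, false  => (p.1, cns true (cns true (tl (tl p.2))))
  | true, true   => (p.1 + 1, cns false (cns false (tl (tl p.2))))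

def Ai : XX → XX := fun p =>
  match p.2 0, p.2 1 with
  | false, false => (p.1 - 1, cns true (cns true (tl (tl p.2))))
  | false, true  => (p.1, cns false (cns false (tl (tl p.2))))
  | true, false  => (p.1, cns false (cns true (tl (tl p.2))))
  | true, true   => (p.1, cns true (cns false (tl (tl p.2))))

def Bf : XX → XX := fun p =>
  match p.2 0, p.2 1 with
  | false, b => (p.1, cns true (cns false (cns b (tl (tl p.2)))))
  | true, false => (p.1, cns true (cns true (tl (tl p.2))))
  | true, true  => (p.1 + 1, cns false (tl (tl p.2)))

def Bi : XX → XX := fun p =>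
  match p.2 0, p.2 1 with
  | true, false => (p.1, cns false (tl (tl p.2)))
  | true, true  => (p.1, cns true (cns false (tl (tl p.2))))
  | false, b => (p.1 - 1, cns true (cns true (cns b (tl (tl p.2)))))

def Zf : XX → XX := fun p => (p.1 + 1, p.2)

@[simp] lemma Af_ff (m : ℤ) (s : Seq) :
    Af (m, cns false (cns false s)) = (m, cns false (cns true s)) := rfl
@[simp] lemma Af_ft (m : ℤ) (s : Seq) :
    Af (m, cns false (cns true s)) = (m, cns true (cns false s)) := rfl
@[simp] lemma Af_tf (m : ℤ) (s : Seq) :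
    Af (m, cns true (cns false s)) = (m, cns true (cns true s)) := rfl
@[simp] lemma Af_tt (m : ℤ) (s : Seq) :
    Af (m, cns true (cns true s)) = (m + 1, cns false (cns false s)) := rfl

@[simp] lemma Ai_ff (m : ℤ) (s : Seq) :
    Ai (m, cns false (cns false s)) = (m - 1, cns true (cns true s)) := rfl
@[simp] lemma Ai_ft (m : ℤ) (s : Seq) :
    Ai (m, cns false (cns true s)) = (m, cns false (cns false s)) := rfl
@[simp] lemma Ai_tf (m : ℤ) (s : Seq) :
    Ai (m, cns true (cns false s)) = (m, cns false (cns true s)) := rfl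
@[simp] lemma Ai_tt (m : ℤ) (s : Seq) :
    Ai (m, cns true (cns true s)) = (m, cns true (cns false s)) := rfl

@[simp] lemma Bf_f (m : ℤ) (b : Bool) (s : Seq) :
    Bf (m, cns false (cns b s)) = (m, cns true (cns false (cns b s))) := rfl
@[simp] lemma Bf_tf (m : ℤ) (s : Seq) :
    Bf (m, cns true (cns false s)) = (m, cns true (cns true s)) := rfl
@[simp] lemma Bf_tt (m : ℤ) (s : Seq) :
    Bf (m, cns true (cns true s)) = (m + 1, cns false s) := rfl

@[simp] lemma Bi_tf (m : ℤ) (s : Seq) :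
    Bi (m, cns true (cns false s)) = (m, cns false s) := rfl
@[simp] lemma Bi_tt (m : ℤ) (s : Seq) :
    Bi (m, cns true (cns true s)) = (m, cns true (cns false s)) := rfl
@[simp] lemma Bi_f (m : ℤ) (b : Bool) (s : Seq) :
    Bi (m, cns false (cns b s)) = (m - 1, cns true (cns true (cns b s))) := rfl

@[simp] lemma Zf_pair (m : ℤ) (s : Seq) : Zf (m, s) = (m + 1, s) := rfl
lemma key_aA (m : ℤ) (b0 b1 : Bool) (t : Seq) :
    Ai (Af ((m, cns b0 (cns b1 (t))))) =
    (m, cns b0 (cns b1 (t))) := by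
  cases b0 <;> cases b1 <;> simp <;> try omega

lemma key_Aa (m : ℤ) (b0 b1 : Bool) (t : Seq) :
    Af (Ai ((m, cns b0 (cns b1 (t))))) =
    (m, cns b0 (cns b1 (t))) := by
  cases b0 <;> cases b1 <;> simp <;> try omega

lemma key_bB (m : ℤ) (b0 b1 b2 : Bool) (t : Seq) :
    Bi (Bf ((m, cns b0 (cns b1 (cns b2 (t)))))) =
    (m, cns b0 (cns b1 (cns b2 (t)))) := by
  cases b0 <;> cases b1 <;> cases b2 <;> simp <;> try omega

lemma key_Bb (m : ℤ) (b0 b1 b2 : Bool) (t : Seq) :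
    Bf (Bi ((m, cns b0 (cns b1 (cns b2 (t)))))) =
    (m, cns b0 (cns b1 (cns b2 (t)))) := by
  cases b0 <;> cases b1 <;> cases b2 <;> simp <;> try omega

lemma key_A4 (m : ℤ) (b0 b1 : Bool) (t : Seq) :
    Af (Af (Af (Af ((m, cns b0 (cns b1 (t))))))) =
    (m + 1, cns b0 (cns b1 (t))) := by
  cases b0 <;> cases b1 <;> simp <;> try omega

lemma key_B3 (m : ℤ) (b0 b1 b2 : Bool) (t : Seq) :
    Bf (Bf (Bf ((m, cns b0 (cns b1 (cns b2 (t))))))) =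
    (m + 1, cns b0 (cns b1 (cns b2 (t)))) := by
  cases b0 <;> cases b1 <;> cases b2 <;> simp <;> try omega

lemma key_BA5 (m : ℤ) (b0 b1 b2 : Bool) (t : Seq) :
    Bf (Af (Bf (Af (Bf (Af (Bf (Af (Bf (Af ((m, cns b0 (cns b1 (cns b2 (t)))))))))))))) =
    (m + 3, cns b0 (cns b1 (cns b2 (t)))) := by
  cases b0 <;> cases b1 <;> cases b2 <;> simp <;> try omega

lemma key_c1 (m : ℤ) (b0 b1 b2 : Bool) (t : Seq) :
    Bf (Af (Bf (Af (Af (Bf (Af (Bf (Af (Af ((m, cns b0 (cns b1 (cns b2 (t)))))))))))))) =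
    Af (Af (Bf (Af (Bf (Af (Af (Bf (Af (Bf ((m, cns b0 (cns b1 (cns b2 (t)))))))))))))) := by
  cases b0 <;> cases b1 <;> cases b2 <;> simp <;> try omega

lemma key_c2 (m : ℤ) (b0 b1 b2 b3 : Bool) (t : Seq) :
    Bf (Af (Bf (Af (Af (Bf (Af (Af (Bf (Af (Bf (Af (Af (Bf (Bf (Af (Af ((m, cns b0 (cns b1 (cns b2 (cns b3 (t)))))))))))))))))))))) =
    Af (Af (Bf (Af (Af (Bf (Af (Bf (Af (Af (Bf (Bf (Af (Af (Bf (Af (Bf ((m, cns b0 (cns b1 (cns b2 (cns b3 (t)))))))))))))))))))))) := by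
  cases b0 <;> cases b1 <;> cases b2 <;> cases b3 <;> simp <;> try omega

lemma key_AZ (m : ℤ) (b0 b1 : Bool) (t : Seq) :
    Af (Zf ((m, cns b0 (cns b1 (t))))) =
    Zf (Af ((m, cns b0 (cns b1 (t))))) := by
  cases b0 <;> cases b1 <;> simp <;> try omega

lemma key_BZ (m : ℤ) (b0 b1 b2 : Bool) (t : Seq) :
    Bf (Zf ((m, cns b0 (cns b1 (cns b2 (t)))))) =
    Zf (Bf ((m, cns b0 (cns b1 (cns b2 (t)))))) := by
  cases b0 <;> cases b1 <;> cases b2 <;> simp <;> try omega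

def PA : Equiv.Perm XX :=
  ⟨Af, Ai,
   fun p => by
     obtain ⟨m, s⟩ := p
     have h := key_aA m (s 0) (s 1) (tl (tl s)); rwa [eta2] at h,
   fun p => by
     obtain ⟨m, s⟩ := p
     have h := key_Aa m (s 0) (s 1) (tl (tl s)); rwa [eta2] at h⟩

def PB : Equiv.Perm XX :=
  ⟨Bf, Bi,
   fun p => by
     obtain ⟨m, s⟩ := p
     have h := key_bB m (s 0) (s 1) (s 2) (tl (tl (tl s))); rwa [eta3] at h,
   fun p => by
     obtain ⟨m, s⟩ := p
     have h := key_Bb m (s 0) (s 1) (s 2) (tl (tl (tl s))); rwa [eta3] at h⟩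

def PZ : Equiv.Perm XX :=
  ⟨Zf, fun p => (p.1 - 1, p.2), fun p => by simp [Zf], fun p => by simp [Zf]⟩

@[simp] lemma PA_apply (p : XX) : PA p = Af p := rfl
@[simp] lemma PB_apply (p : XX) : PB p = Bf p := rfl
@[simp] lemma PZ_apply (p : XX) : PZ p = Zf p := rfl
@[simp] lemma PA_inv_apply (p : XX) : PA⁻¹ p = Ai p := rfl
@[simp] lemma PB_inv_apply (p : XX) : PB⁻¹ p = Bi p := rfl

lemma PA4 : PA ^ 4 = PZ := by
  apply Equiv.ext; rintro ⟨m, s⟩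
  have h := key_A4 m (s 0) (s 1) (tl (tl s)); rw [eta2] at h
  show (PA ^ 4) (m, s) = Zf (m, s)
  simp [pow_succ, Equiv.Perm.mul_apply, h]

lemma PB3 : PB ^ 3 = PZ := by
  apply Equiv.ext; rintro ⟨m, s⟩
  have h := key_B3 m (s 0) (s 1) (s 2) (tl (tl (tl s))); rw [eta3] at h
  show (PB ^ 3) (m, s) = Zf (m, s)
  simp [pow_succ, Equiv.Perm.mul_apply, h]

lemma PBA5 : (PB * PA) ^ 5 = PZ ^ 3 := by
  apply Equiv.ext; rintro ⟨m, s⟩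
  have h := key_BA5 m (s 0) (s 1) (s 2) (tl (tl (tl s))); rw [eta3] at h
  show ((PB * PA) ^ 5) (m, s) = (PZ ^ 3) (m, s)
  simp [pow_succ, Equiv.Perm.mul_apply, h]
  omega

lemma Pc1 : ⁅PB * PA * PB, PA ^ 2 * PB * PA * PB * PA ^ 2⁆ = 1 := by
  rw [commutatorElement_eq_one_iff_mul_comm]
  apply Equiv.ext; rintro ⟨m, s⟩
  have h := key_c1 m (s 0) (s 1) (s 2) (tl (tl (tl s))); rw [eta3] at h
  show _ = _
  simpa [pow_succ, Equiv.Perm.mul_apply] using h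

lemma Pc2 : ⁅PB * PA * PB, PA ^ 2 * PB * PA ^ 2 * PB * PA * PB * PA ^ 2 * PB ^ 2 * PA ^ 2⁆ = 1 := by
  rw [commutatorElement_eq_one_iff_mul_comm]
  apply Equiv.ext; rintro ⟨m, s⟩
  have h := key_c2 m (s 0) (s 1) (s 2) (s 3) (tl (tl (tl (tl s)))); rw [eta4] at h
  simpa [pow_succ, Equiv.Perm.mul_apply] using h

lemma PAZ : ⁅PA, PZ⁆ = 1 := by
  rw [commutatorElement_eq_one_iff_mul_comm]
  apply Equiv.ext; rintro ⟨m, s⟩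
  have h := key_AZ m (s 0) (s 1) (tl (tl s)); rw [eta2] at h
  simpa [Equiv.Perm.mul_apply] using h

lemma PBZ : ⁅PB, PZ⁆ = 1 := by
  rw [commutatorElement_eq_one_iff_mul_comm]
  apply Equiv.ext; rintro ⟨m, s⟩
  have h := key_BZ m (s 0) (s 1) (s 2) (tl (tl (tl s))); rw [eta3] at h
  simpa [Equiv.Perm.mul_apply] using h

lemma PZ_zpow (k : ℤ) : ∀ p : XX, (PZ ^ k) p = (p.1 + k, p.2) := by
  induction k using Int.induction_on with
  | zero => intro p; simp
  | succ i ih =>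
      intro p
      rw [show ((i : ℤ) + 1) = (i + 1 : ℤ) from rfl, zpow_add_one, Equiv.Perm.mul_apply, ih]
      simp [Zf]; ring
  | pred i ih =>
      intro p
      rw [sub_eq_add_neg, zpow_add, zpow_neg_one, Equiv.Perm.mul_apply, ih]
      show ((p.1 - 1 + _ : ℤ), p.2) = _
      simp; ring

lemma PZ_inf (k : ℤ) (h : PZ ^ k = 1) : k = 0 := by
  have := congrArg (fun e : Equiv.Perm XX => (e ((0 : ℤ), fun _ => false)).1) h
  simpa [PZ_zpow] using this
section PG
variable {n p q : ℤ}

lemma relator_eq_one {r : FreeGroup (Fin 3)} (h : r ∈ Trels n p q) :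
    PresentedGroup.mk (Trels n p q) r = 1 :=
  (QuotientGroup.eq_one_iff r).mpr (Subgroup.subset_normalClosure h)

lemma mk_of (i : Fin 3) :
    PresentedGroup.mk (Trels n p q) (FreeGroup.of i) = PresentedGroup.of i := rfl

lemma mem1 : (gb * ga) ^ 5 * gz ^ (-n) ∈ Trels n p q := Set.mem_insert _ _
lemma mem2 : ga ^ 4 * gz ^ (-p) ∈ Trels n p q :=
  Set.mem_insert_of_mem _ (Set.mem_insert _ _)
lemma mem3 : gb ^ 3 * gz ^ (-q) ∈ Trels n p q :=
  Set.mem_insert_of_mem _ (Set.mem_insert_of_mem _ (Set.mem_insert _ _))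
lemma mem4 : ⁅gb * ga * gb, ga ^ 2 * gb * ga * gb * ga ^ 2⁆ ∈ Trels n p q :=
  Set.mem_insert_of_mem _ (Set.mem_insert_of_mem _ (Set.mem_insert_of_mem _
    (Set.mem_insert _ _)))
lemma mem5 : ⁅gb * ga * gb, ga ^ 2 * gb * ga ^ 2 * gb * ga * gb * ga ^ 2 * gb ^ 2 * ga ^ 2⁆
    ∈ Trels n p q :=
  Set.mem_insert_of_mem _ (Set.mem_insert_of_mem _ (Set.mem_insert_of_mem _
    (Set.mem_insert_of_mem _ (Set.mem_insert _ _))))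
lemma mem6 : ⁅ga, gz⁆ ∈ Trels n p q :=
  Set.mem_insert_of_mem _ (Set.mem_insert_of_mem _ (Set.mem_insert_of_mem _
    (Set.mem_insert_of_mem _ (Set.mem_insert_of_mem _ (Set.mem_insert _ _)))))
lemma mem7 : ⁅gb, gz⁆ ∈ Trels n p q :=
  Set.mem_insert_of_mem _ (Set.mem_insert_of_mem _ (Set.mem_insert_of_mem _
    (Set.mem_insert_of_mem _ (Set.mem_insert_of_mem _ (Set.mem_insert_of_mem _ rfl)))))

lemma rel_ba :
    ((PresentedGroup.of 1 : Tnpq n p q) * PresentedGroup.of 0) ^ 5 =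
      (PresentedGroup.of 2 : Tnpq n p q) ^ n := by
  have h := relator_eq_one (mem1 (n := n) (p := p) (q := q))
  simpa [ga, gb, gz, map_mul, map_pow, map_zpow, mk_of, zpow_neg, mul_inv_eq_one] using h

lemma rel_a :
    (PresentedGroup.of 0 : Tnpq n p q) ^ 4 = (PresentedGroup.of 2 : Tnpq n p q) ^ p := by
  have h := relator_eq_one (mem2 (n := n) (p := p) (q := q))
  simpa [ga, gz, map_mul, map_pow, map_zpow, mk_of, zpow_neg, mul_inv_eq_one] using h

lemma rel_b :
    (PresentedGroup.of 1 : Tnpq n p q) ^ 3 = (PresentedGroup.of 2 : Tnpq n p q) ^ q := by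
  have h := relator_eq_one (mem3 (n := n) (p := p) (q := q))
  simpa [gb, gz, map_mul, map_pow, map_zpow, mk_of, zpow_neg, mul_inv_eq_one] using h

lemma rel_c1 :
    ⁅(PresentedGroup.of 1 : Tnpq n p q) * PresentedGroup.of 0 * PresentedGroup.of 1,
      (PresentedGroup.of 0 : Tnpq n p q) ^ 2 * PresentedGroup.of 1 * PresentedGroup.of 0 *
        PresentedGroup.of 1 * (PresentedGroup.of 0) ^ 2⁆ = 1 := by
  have h := relator_eq_one (mem4 (n := n) (p := p) (q := q))
  simpa [ga, gb, map_commutatorElement, map_mul, map_pow, mk_of] using h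

lemma rel_c2 :
    ⁅(PresentedGroup.of 1 : Tnpq n p q) * PresentedGroup.of 0 * PresentedGroup.of 1,
      (PresentedGroup.of 0 : Tnpq n p q) ^ 2 * PresentedGroup.of 1 *
        (PresentedGroup.of 0) ^ 2 * PresentedGroup.of 1 * PresentedGroup.of 0 *
        PresentedGroup.of 1 * (PresentedGroup.of 0) ^ 2 * (PresentedGroup.of 1) ^ 2 *
        (PresentedGroup.of 0) ^ 2⁆ = 1 := by
  have h := relator_eq_one (mem5 (n := n) (p := p) (q := q))
  simpa [ga, gb, map_commutatorElement, map_mul, map_pow, mk_of] using h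

lemma z_comm (g : Tnpq n p q) :
    (PresentedGroup.of 2 : Tnpq n p q) * g = g * PresentedGroup.of 2 := by
  have hmem : g ∈ Subgroup.centralizer {(PresentedGroup.of 2 : Tnpq n p q)} := by
    apply PresentedGroup.generated_by
    intro j
    rw [Subgroup.mem_centralizer_iff]
    intro h hh
    rcases hh with rfl
    fin_cases j
    · have h6 := relator_eq_one (mem6 (n := n) (p := p) (q := q))
      rw [show PresentedGroup.mk (Trels n p q) ⁅ga, gz⁆ =
        ⁅(PresentedGroup.of 0 : Tnpq n p q), PresentedGroup.of 2⁆ from by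
          simp [ga, gz, map_commutatorElement, mk_of]] at h6
      exact (commutatorElement_eq_one_iff_mul_comm.mp h6).symm
    · have h7 := relator_eq_one (mem7 (n := n) (p := p) (q := q))
      rw [show PresentedGroup.mk (Trels n p q) ⁅gb, gz⁆ =
        ⁅(PresentedGroup.of 1 : Tnpq n p q), PresentedGroup.of 2⁆ from by
          simp [gb, gz, map_commutatorElement, mk_of]] at h7
      exact (commutatorElement_eq_one_iff_mul_comm.mp h7).symm
    · rfl
  exact Subgroup.mem_centralizer_iff.mp hmem _ (Set.mem_singleton _)

lemma z_commute (g : Tnpq n p q) : Commute (PresentedGroup.of 2 : Tnpq n p q) g :=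
  z_comm g

end PG
section Fold
variable {G : Type*} [Group G] {z : G} (hz : ∀ g : G, Commute z g)

include hz

lemma fold_zpow_comm (k : ℤ) (g : G) : z ^ k * g = g * z ^ k :=
  ((hz g).zpow_left k).eq

lemma fold_mul (u v : G) (k l : ℤ) :
    (u * z ^ k) * (v * z ^ l) = (u * v) * z ^ (k + l) := by
  rw [mul_assoc u, ← mul_assoc (z ^ k), fold_zpow_comm hz, mul_assoc v, ← zpow_add,
    ← mul_assoc]

lemma fold_inv (u : G) (k : ℤ) : (u * z ^ k)⁻¹ = u⁻¹ * z ^ (-k) := by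
  rw [mul_inv_rev, ← zpow_neg, fold_zpow_comm hz]

lemma fold_pow (u : G) (k : ℤ) (j : ℕ) : (u * z ^ k) ^ j = u ^ j * z ^ (k * j) := by
  rw [((hz u).zpow_left k).symm.mul_pow, ← zpow_natCast (z ^ k), ← zpow_mul]

lemma fold_comm (u v : G) (k l : ℤ) : ⁅u * z ^ k, v * z ^ l⁆ = ⁅u, v⁆ := by
  rw [commutatorElement_def, commutatorElement_def, fold_inv hz, fold_inv hz,
    fold_mul hz, fold_mul hz, fold_mul hz]
  simp

end Fold

section MkHom
variable {n p q : ℤ} {G : Type*} [Group G] (a b z : G)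

/-- Build a homomorphism out of `Tnpq n p q` from elements satisfying the relations. -/
def mkHom (hza : Commute z a) (hzb : Commute z b)
    (h1 : (b * a) ^ 5 = z ^ n) (h2 : a ^ 4 = z ^ p) (h3 : b ^ 3 = z ^ q)
    (h4 : ⁅b * a * b, a ^ 2 * b * a * b * a ^ 2⁆ = 1)
    (h5 : ⁅b * a * b, a ^ 2 * b * a ^ 2 * b * a * b * a ^ 2 * b ^ 2 * a ^ 2⁆ = 1) :
    Tnpq n p q →* G := by
  refine PresentedGroup.toGroup (f := ![a, b, z]) ?_
  intro r hr
  rcases hr with rfl | rfl | rfl | rfl | rfl | rfl | rfl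
  · simp only [ga, gb, gz, map_mul, map_pow, map_zpow, FreeGroup.lift_apply_of]
    show (b * a) ^ 5 * z ^ (-n) = 1
    rw [h1, ← zpow_add, add_neg_cancel, zpow_zero]
  · simp only [ga, gz, map_mul, map_pow, map_zpow, FreeGroup.lift_apply_of]
    show a ^ 4 * z ^ (-p) = 1
    rw [h2, ← zpow_add, add_neg_cancel, zpow_zero]
  · simp only [gb, gz, map_mul, map_pow, map_zpow, FreeGroup.lift_apply_of]
    show b ^ 3 * z ^ (-q) = 1
    rw [h3, ← zpow_add, add_neg_cancel, zpow_zero]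
  · simp only [ga, gb, map_commutatorElement, map_mul, map_pow, FreeGroup.lift_apply_of]
    exact h4
  · simp only [ga, gb, map_commutatorElement, map_mul, map_pow, FreeGroup.lift_apply_of]
    exact h5
  · simp only [ga, gz, map_commutatorElement, FreeGroup.lift_apply_of]
    exact commutatorElement_eq_one_iff_mul_comm.mpr hza.symm.eq
  · simp only [gb, gz, map_commutatorElement, FreeGroup.lift_apply_of]
    exact commutatorElement_eq_one_iff_mul_comm.mpr hzb.symm.eq

lemma mkHom_of0 (hza hzb h1 h2 h3 h4 h5) :
    mkHom (n := n) (p := p) (q := q) a b z hza hzb h1 h2 h3 h4 h5 (PresentedGroup.of 0) = a :=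
  PresentedGroup.toGroup.of _

lemma mkHom_of1 (hza hzb h1 h2 h3 h4 h5) :
    mkHom (n := n) (p := p) (q := q) a b z hza hzb h1 h2 h3 h4 h5 (PresentedGroup.of 1) = b :=
  PresentedGroup.toGroup.of _

lemma mkHom_of2 (hza hzb h1 h2 h3 h4 h5) :
    mkHom (n := n) (p := p) (q := q) a b z hza hzb h1 h2 h3 h4 h5 (PresentedGroup.of 2) = z :=
  PresentedGroup.toGroup.of _

end MkHom
section Shift

lemma exists_hom (n p q n' p' q' x y : ℤ)
    (hn : n = n' + 5 * x + 5 * y) (hp : p = p' + 4 * x) (hq : q = q' + 3 * y) :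
    ∃ φ : Tnpq n p q →* Tnpq n' p' q',
      φ (PresentedGroup.of 0) =
        PresentedGroup.of 0 * (PresentedGroup.of 2 : Tnpq n' p' q') ^ x ∧
      φ (PresentedGroup.of 1) =
        PresentedGroup.of 1 * (PresentedGroup.of 2 : Tnpq n' p' q') ^ y ∧
      φ (PresentedGroup.of 2) = PresentedGroup.of 2 := by
  subst hn hp hq
  set α : Tnpq (n' + 5*x + 5*y) (p' + 4*x) (q' + 3*y) →* Tnpq n' p' q' :=
    mkHom (PresentedGroup.of 0 * PresentedGroup.of 2 ^ x)
      (PresentedGroup.of 1 * PresentedGroup.of 2 ^ y) (PresentedGroup.of 2)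
      (z_commute _) (z_commute _)
      (by
        rw [fold_mul z_commute, fold_pow z_commute, rel_ba, ← zpow_add]
        congr 1; ring)
      (by
        rw [fold_pow z_commute, rel_a, ← zpow_add]
        congr 1; ring)
      (by
        rw [fold_pow z_commute, rel_b, ← zpow_add]
        congr 1; ring)
      (by
        simp only [fold_pow z_commute, fold_mul z_commute, fold_comm z_commute]
        exact rel_c1)
      (by
        simp only [fold_pow z_commute, fold_mul z_commute, fold_comm z_commute]
        exact rel_c2) with hα
  exact ⟨α, mkHom_of0 _ _ _ _ _ _ _ _ _ _, mkHom_of1 _ _ _ _ _ _ _ _ _ _,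
    mkHom_of2 _ _ _ _ _ _ _ _ _ _⟩

lemma exists_iso (n p q n' p' q' x y : ℤ)
    (hn : n = n' + 5 * x + 5 * y) (hp : p = p' + 4 * x) (hq : q = q' + 3 * y) :
    ∃ e : Tnpq n p q ≃* Tnpq n' p' q',
      e (PresentedGroup.of 2) = PresentedGroup.of 2 ∧
      e (PresentedGroup.of 0) =
        PresentedGroup.of 0 * (PresentedGroup.of 2 : Tnpq n' p' q') ^ x ∧
      e (PresentedGroup.of 1) =
        PresentedGroup.of 1 * (PresentedGroup.of 2 : Tnpq n' p' q') ^ y := by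
  obtain ⟨φ, hφ0, hφ1, hφ2⟩ := exists_hom n p q n' p' q' x y hn hp hq
  obtain ⟨ψ, hψ0, hψ1, hψ2⟩ := exists_hom n' p' q' n p q (-x) (-y)
    (by omega) (by omega) (by omega)
  have h1 : ψ.comp φ = MonoidHom.id _ := by
    ext i
    fin_cases i
    · show ψ (φ (PresentedGroup.of 0)) = PresentedGroup.of 0
      rw [hφ0, map_mul, map_zpow, hψ0, hψ2, mul_assoc, ← zpow_add, neg_add_cancel,
        zpow_zero, mul_one]
    · show ψ (φ (PresentedGroup.of 1)) = PresentedGroup.of 1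
      rw [hφ1, map_mul, map_zpow, hψ1, hψ2, mul_assoc, ← zpow_add, neg_add_cancel,
        zpow_zero, mul_one]
    · show ψ (φ (PresentedGroup.of 2)) = PresentedGroup.of 2
      rw [hφ2, hψ2]
  have h2 : φ.comp ψ = MonoidHom.id _ := by
    ext i
    fin_cases i
    · show φ (ψ (PresentedGroup.of 0)) = PresentedGroup.of 0
      rw [hψ0, map_mul, map_zpow, hφ0, hφ2, mul_assoc, ← zpow_add, add_neg_cancel,
        zpow_zero, mul_one]
    · show φ (ψ (PresentedGroup.of 1)) = PresentedGroup.of 1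
      rw [hψ1, map_mul, map_zpow, hφ1, hφ2, mul_assoc, ← zpow_add, add_neg_cancel,
        zpow_zero, mul_one]
    · show φ (ψ (PresentedGroup.of 2)) = PresentedGroup.of 2
      rw [hψ2, hφ2]
  exact ⟨MonoidHom.toMulEquiv φ ψ h1 h2, hφ2, hφ0, hφ1⟩

end Shift
section Kc

def Cz : Subgroup (Equiv.Perm XX) := Subgroup.centralizer {PZ}

lemma commPZ_of_comm {g : Equiv.Perm XX} (h : ⁅g, PZ⁆ = 1) : g ∈ Cz := by
  unfold Cz
  rw [Subgroup.mem_centralizer_iff]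
  intro h' hh'
  rcases hh' with rfl
  exact (commutatorElement_eq_one_iff_mul_comm.mp h).symm

def PAc : Cz := ⟨PA, commPZ_of_comm PAZ⟩
def PBc : Cz := ⟨PB, commPZ_of_comm PBZ⟩
def PZc : Cz := ⟨PZ, commPZ_of_comm (by simp)⟩

lemma PZc_comm (g : Cz) : Commute PZc g := by
  have hg := g.2
  unfold Cz at hg
  rw [Subgroup.mem_centralizer_iff] at hg
  exact Subtype.ext (hg PZ (Set.mem_singleton _))

abbrev HH := Cz × Multiplicative ℤ

def zeta (c : ℤ) : HH := (PZc, Multiplicative.ofAdd (-c))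

lemma zeta_comm (c : ℤ) (h : HH) : Commute (zeta c) h := by
  refine Prod.ext ?_ ?_
  · exact (PZc_comm h.1)
  · exact mul_comm _ _

def Nc (c : ℤ) : Subgroup HH := Subgroup.zpowers (zeta c)

instance Nc_normal (c : ℤ) : (Nc c).Normal := by
  constructor
  rintro nn hnn g
  obtain ⟨j, rfl⟩ := Subgroup.mem_zpowers_iff.mp hnn
  have hc : Commute (zeta c ^ j) g := ((zeta_comm c g).zpow_left j)
  rw [← hc.eq, mul_assoc, mul_inv_cancel, mul_one]
  exact Subgroup.zpow_mem _ (Subgroup.mem_zpowers _) j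

abbrev Kc (c : ℤ) := HH ⧸ Nc c

def projK (c : ℤ) : HH →* Kc c := QuotientGroup.mk' (Nc c)

lemma projK_eq (c : ℤ) (u v : HH) (h : u⁻¹ * v ∈ Nc c) : projK c u = projK c v := by
  have : (u : Kc c) = (v : Kc c) := QuotientGroup.eq.mpr h
  exact this

lemma PAc_pow4 : PAc ^ 4 = PZc := by
  apply Subtype.ext
  show ((PAc ^ 4 : Cz) : Equiv.Perm XX) = PZ
  rw [SubmonoidClass.coe_pow]
  exact PA4

lemma PBc_pow3 : PBc ^ 3 = PZc := by
  apply Subtype.ext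
  show ((PBc ^ 3 : Cz) : Equiv.Perm XX) = PZ
  rw [SubmonoidClass.coe_pow]
  exact PB3

lemma PBAc5 : (PBc * PAc) ^ 5 = PZc ^ 3 := by
  apply Subtype.ext
  show ((_ : Cz) : Equiv.Perm XX) = ((_ : Cz) : Equiv.Perm XX)
  rw [SubmonoidClass.coe_pow, SubmonoidClass.coe_pow, Subgroup.coe_mul]
  exact PBA5

lemma Cc1 : ⁅PBc * PAc * PBc, PAc ^ 2 * PBc * PAc * PBc * PAc ^ 2⁆ = 1 := by
  apply Subtype.ext
  rw [show ((⁅PBc * PAc * PBc, PAc ^ 2 * PBc * PAc * PBc * PAc ^ 2⁆ : Cz) : Equiv.Perm XX) =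
    ⁅PB * PA * PB, PA ^ 2 * PB * PA * PB * PA ^ 2⁆ from by
      simp [commutatorElement_def, PAc, PBc]]
  exact Pc1

lemma Cc2 : ⁅PBc * PAc * PBc,
    PAc ^ 2 * PBc * PAc ^ 2 * PBc * PAc * PBc * PAc ^ 2 * PBc ^ 2 * PAc ^ 2⁆ = 1 := by
  apply Subtype.ext
  rw [show ((⁅PBc * PAc * PBc,
      PAc ^ 2 * PBc * PAc ^ 2 * PBc * PAc * PBc * PAc ^ 2 * PBc ^ 2 * PAc ^ 2⁆ : Cz) :
        Equiv.Perm XX) =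
    ⁅PB * PA * PB, PA ^ 2 * PB * PA ^ 2 * PB * PA * PB * PA ^ 2 * PB ^ 2 * PA ^ 2⁆ from by
      simp [commutatorElement_def, PAc, PBc]]
  exact Pc2

def aK (c : ℤ) : Kc c := projK c (PAc, 1)
def bK (c : ℤ) : Kc c := projK c (PBc, 1)
def zK (c : ℤ) : Kc c := projK c (1, Multiplicative.ofAdd 1)

lemma zK_zpow (c k : ℤ) : zK c ^ k = projK c (1, Multiplicative.ofAdd k) := by
  rw [zK, ← map_zpow]
  congr 1
  refine Prod.ext (by simp) ?_
  show (Multiplicative.ofAdd 1) ^ k = Multiplicative.ofAdd k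
  rw [← Multiplicative.toAdd.injective.eq_iff, toAdd_zpow]
  simp

lemma hK2 (c : ℤ) : aK c ^ 4 = zK c ^ c := by
  rw [zK_zpow, aK, ← map_pow]
  apply projK_eq
  refine Subgroup.mem_zpowers_iff.mpr ⟨-1, ?_⟩
  refine Prod.ext ?_ ?_
  · simp [zeta, PAc_pow4]
  · simp [zeta]

end Kc
section Kc2

lemma hK3 (c : ℤ) : bK c ^ 3 = zK c ^ c := by
  rw [zK_zpow, bK, ← map_pow]
  apply projK_eq
  refine Subgroup.mem_zpowers_iff.mpr ⟨-1, ?_⟩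
  refine Prod.ext ?_ ?_
  · simp [zeta, PBc_pow3]
  · simp [zeta]

lemma hK1 (c : ℤ) : (bK c * aK c) ^ 5 = zK c ^ (3 * c) := by
  rw [zK_zpow, bK, aK, ← map_mul, ← map_pow]
  apply projK_eq
  refine Subgroup.mem_zpowers_iff.mpr ⟨-3, ?_⟩
  refine Prod.ext ?_ ?_
  · simp only [zeta]
    rw [show (((PBc, 1) : HH) * (PAc, 1)) = ((PBc * PAc, 1) : HH) from by
      refine Prod.ext rfl ?_
      simp]
    simp [Prod.pow_mk, PBAc5]
  · simp only [zeta]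
    rw [← Multiplicative.toAdd.injective.eq_iff]
    simp [toAdd_zpow, Prod.pow_mk]
    ring

lemma comm_zK_aK (c : ℤ) : Commute (zK c) (aK c) := by
  rw [zK, aK]
  apply Commute.map
  refine Prod.ext ?_ ?_ <;> simp

lemma comm_zK_bK (c : ℤ) : Commute (zK c) (bK c) := by
  rw [zK, bK]
  apply Commute.map
  refine Prod.ext ?_ ?_ <;> simp

lemma hK4 (c : ℤ) :
    ⁅bK c * aK c * bK c, aK c ^ 2 * bK c * aK c * bK c * aK c ^ 2⁆ = 1 := by
  have hw : (⁅((PBc, 1) : HH) * (PAc, 1) * (PBc, 1),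
      ((PAc, 1) : HH) ^ 2 * (PBc, 1) * (PAc, 1) * (PBc, 1) * ((PAc, 1) : HH) ^ 2⁆ : HH)
      = 1 := by
    rw [commutatorElement_def]
    refine Prod.ext ?_ ?_
    · have := Cc1
      rw [commutatorElement_def] at this
      simpa using this
    · simp
  rw [aK, bK]
  simp only [← map_pow, ← map_mul, ← map_commutatorElement]
  rw [hw, map_one]

lemma hK5 (c : ℤ) :
    ⁅bK c * aK c * bK c,
      aK c ^ 2 * bK c * aK c ^ 2 * bK c * aK c * bK c * aK c ^ 2 * bK c ^ 2 * aK c ^ 2⁆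
      = 1 := by
  have hw : (⁅((PBc, 1) : HH) * (PAc, 1) * (PBc, 1),
      ((PAc, 1) : HH) ^ 2 * (PBc, 1) * ((PAc, 1) : HH) ^ 2 * (PBc, 1) * (PAc, 1) * (PBc, 1) *
        ((PAc, 1) : HH) ^ 2 * ((PBc, 1) : HH) ^ 2 * ((PAc, 1) : HH) ^ 2⁆ : HH) = 1 := by
    rw [commutatorElement_def]
    refine Prod.ext ?_ ?_
    · have := Cc2
      rw [commutatorElement_def] at this
      simpa using this
    · simp
  rw [aK, bK]
  simp only [← map_pow, ← map_mul, ← map_commutatorElement]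
  rw [hw, map_one]

lemma zK_inf (c k : ℤ) (h : zK c ^ k = 1) : k = 0 := by
  rw [zK_zpow] at h
  have hmem : ((1, Multiplicative.ofAdd k) : HH) ∈ Nc c :=
    (QuotientGroup.eq_one_iff _).mp h
  obtain ⟨j, hj⟩ := Subgroup.mem_zpowers_iff.mp hmem
  have h1 : PZc ^ j = 1 := congrArg Prod.fst hj
  have h2 : PZ ^ j = 1 := by
    have := congrArg (Subtype.val) h1
    simpa [PZc] using this
  have hj0 : j = 0 := PZ_inf j h2
  subst hj0
  have := congrArg Prod.snd hj
  have h3 : Multiplicative.ofAdd (0 : ℤ) = Multiplicative.ofAdd k := by simpa [zeta] using this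
  simpa using h3.symm

theorem z_inf (n p q k : ℤ) (h : (PresentedGroup.of 2 : Tnpq n p q) ^ k = 1) : k = 0 := by
  set c : ℤ := 12 * n - 15 * p - 20 * q with hc
  obtain ⟨e, he2, _, _⟩ := exists_iso n p q (3 * c) c c (4 * p + 5 * q - 3 * n)
    (5 * p + 7 * q - 4 * n) (by ring) (by ring) (by ring)
  have h' : (PresentedGroup.of 2 : Tnpq (3 * c) c c) ^ k = 1 := by
    have := congrArg e h
    rw [map_zpow, map_one, he2] at this
    exact this
  have hφ : ∃ φ : Tnpq (3 * c) c c →* Kc c, φ (PresentedGroup.of 2) = zK c :=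
    ⟨mkHom (aK c) (bK c) (zK c) (comm_zK_aK c) (comm_zK_bK c)
      (hK1 c) (hK2 c) (hK3 c) (hK4 c) (hK5 c), mkHom_of2 _ _ _ _ _ _ _ _ _ _⟩
  obtain ⟨φ, hφ2⟩ := hφ
  have := congrArg φ h'
  rw [map_zpow, map_one, hφ2] at this
  exact zK_inf c k this

end Kc2
/-- There is an isomorphism of central extensions `T_{n,p,q} ≅ T_{n',p',q'}` sending
`z ↦ z`, `α̃ ↦ α̃ z^x`, `β̃ ↦ β̃ z^y` (hence fixing `z` and inducing the identity on the
quotient `T`) if and only if there exist integers `x, y` with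
`n = n' + 5x + 5y`, `p = p' + 4x`, `q = q' + 3y`. -/
theorem iso_of_central_extensions_iff (n p q n' p' q' : ℤ) :
    (∃ (x y : ℤ) (e : Tnpq n p q ≃* Tnpq n' p' q'),
        e (PresentedGroup.of 2) = PresentedGroup.of 2 ∧
        e (PresentedGroup.of 0) = PresentedGroup.of 0 * (PresentedGroup.of 2 : Tnpq n' p' q') ^ x ∧
        e (PresentedGroup.of 1) = PresentedGroup.of 1 * (PresentedGroup.of 2 : Tnpq n' p' q') ^ y)
    ↔ ∃ x y : ℤ, n = n' + 5 * x + 5 * y ∧ p = p' + 4 * x ∧ q = q' + 3 * y := by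
  constructor
  · rintro ⟨x, y, e, hz, ha, hb⟩
    refine ⟨x, y, ?_, ?_, ?_⟩
    · have h1 := congrArg e (rel_ba (n := n) (p := p) (q := q))
      rw [map_pow, map_mul, map_zpow, ha, hb, hz, fold_mul z_commute, fold_pow z_commute,
        rel_ba, ← zpow_add] at h1
      have h0 := z_inf n' p' q' (n' + (y + x) * 5 - n) (by push_cast at h1; rw [zpow_sub, h1]; simp)
      omega
    · have h1 := congrArg e (rel_a (n := n) (p := p) (q := q))
      rw [map_pow, map_zpow, ha, hz, fold_pow z_commute, rel_a, ← zpow_add] at h1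
      have h0 := z_inf n' p' q' (p' + x * 4 - p) (by push_cast at h1; rw [zpow_sub, h1]; simp)
      omega
    · have h1 := congrArg e (rel_b (n := n) (p := p) (q := q))
      rw [map_pow, map_zpow, hb, hz, fold_pow z_commute, rel_b, ← zpow_add] at h1
      have h0 := z_inf n' p' q' (q' + y * 3 - q) (by push_cast at h1; rw [zpow_sub, h1]; simp)
      omega
  · rintro ⟨x, y, hn, hp, hq⟩
    obtain ⟨e, h2, h0, h1⟩ := exists_iso n p q n' p' q' x y hn hp hq
    exact ⟨x, y, e, h2, h0, h1⟩

end Stmt2
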